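/- The ridge parameter is equivalent to an eigenvalue shift: if Φ is an M×n real matrix with ΦᵀΦ = M·I_n, then Λ Φ (ΦᵀΛΦ + δI_n)⁻¹ Φᵀ = Λ (Λ + (δ/M) I_M)⁻¹ · (Λ + (δ/M) I_M) Φ (Φᵀ(Λ + (δ/M) I_M)Φ)⁻¹ Φᵀ. -/
import Mathlib


open Matrix

theorem ridge_as_eigenvalue_shift
    (M n : ℕ) (hM : 0 < M)
    (lam : Fin M → ℝ) (hpos : ∀ k, 0 < lam k)
    (δ : ℝ) (hδ : 0 < δ)
    (Φ : Matrix (Fin M) (Fin n) ℝ)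
    (horth : Φᵀ * Φ = (M : ℝ) • (1 : Matrix (Fin n) (Fin n) ℝ))
    (hinv1 : IsUnit (Φᵀ * Matrix.diagonal lam * Φ + δ • (1 : Matrix (Fin n) (Fin n) ℝ)))
    (hinv2 : IsUnit (Φᵀ * (Matrix.diagonal lam + (δ / M) • (1 : Matrix (Fin M) (Fin M) ℝ)) * Φ))
    (hinv3 : IsUnit (Matrix.diagonal lam + (δ / M) • (1 : Matrix (Fin M) (Fin M) ℝ))) :
    Matrix.diagonal lam * Φ *
        (Φᵀ * Matrix.diagonal lam * Φ + δ • (1 : Matrix (Fin n) (Fin n) ℝ))⁻¹ * Φᵀ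
      = (Matrix.diagonal lam *
          (Matrix.diagonal lam + (δ / M) • (1 : Matrix (Fin M) (Fin M) ℝ))⁻¹) *
        ((Matrix.diagonal lam + (δ / M) • (1 : Matrix (Fin M) (Fin M) ℝ)) * Φ *
          (Φᵀ * (Matrix.diagonal lam + (δ / M) • (1 : Matrix (Fin M) (Fin M) ℝ)) * Φ)⁻¹ * Φᵀ) := by
  set A := Matrix.diagonal lam + (δ / M) • (1 : Matrix (Fin M) (Fin M) ℝ) with hA
  have hMne : (M : ℝ) ≠ 0 := Nat.cast_ne_zero.mpr hM.ne'
  have hkey : Φᵀ * A * Φ = Φᵀ * Matrix.diagonal lam * Φ + δ • (1 : Matrix (Fin n) (Fin n) ℝ) := by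
    rw [hA, Matrix.mul_add, Matrix.add_mul]
    congr 1
    rw [Matrix.mul_smul, Matrix.mul_one, Matrix.smul_mul, horth, smul_smul,
      div_mul_cancel₀ δ hMne]
  have hAinv : A⁻¹ * A = 1 :=
    Matrix.nonsing_inv_mul A ((Matrix.isUnit_iff_isUnit_det A).mp hinv3)
  rw [hkey]
  calc Matrix.diagonal lam * Φ *
        (Φᵀ * Matrix.diagonal lam * Φ + δ • (1 : Matrix (Fin n) (Fin n) ℝ))⁻¹ * Φᵀ
      = Matrix.diagonal lam * (A⁻¹ * A) * Φ *
        (Φᵀ * Matrix.diagonal lam * Φ + δ • (1 : Matrix (Fin n) (Fin n) ℝ))⁻¹ * Φᵀ := by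
        rw [hAinv, Matrix.mul_one]
    _ = _ := by simp only [Matrix.mul_assoc]
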